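/- Let f : ℝ → ℝ be integrable with ∫_ℝ f = 0 and x ↦ |x| f(x) integrable. Then D₁(f) = 4π ( ∬_{[0,∞)×[0,∞)} min{x, y} f(x) f(y) dx dy + ∬_{(−∞,0]×(−∞,0]} min{|x|, |y|} f(x) f(y) dx dy ), and moreover D₁(f) = ∫_ℝ Φ_f(x) f(x) dx. -/

import Mathlib

open MeasureTheory Real

/-- The primitive `W_f(x) = ∫_{-∞}^x f(y) dy`. -/
noncomputable def W (f : ℝ → ℝ) (x : ℝ) : ℝ := ∫ y in Set.Iic x, f y

/-- The regularized one-dimensional Hartree energy `D₁(f) = 4π ∫ |W_f|²`. -/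
noncomputable def D1 (f : ℝ → ℝ) : ℝ := 4 * π * ∫ x, (W f x) ^ 2

/-- The mean-field potential `Φ_f(x) = -4π ∫_0^x W_f(y) dy`. -/
noncomputable def Phi (f : ℝ → ℝ) (x : ℝ) : ℝ := -4 * π * ∫ y in (0:ℝ)..x, W f y

section Aux

variable {f : ℝ → ℝ}

lemma W_eq (hf : Integrable f) (x : ℝ) : W f x = W f 0 + ∫ t in (0:ℝ)..x, f t := by
  rw [← intervalIntegral.integral_Iic_sub_Iic hf.integrableOn hf.integrableOn]
  unfold W; ring

lemma W_cont (hf : Integrable f) : Continuous (W f) := by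
  have h : W f = fun x => W f 0 + ∫ t in (0:ℝ)..x, f t := funext (W_eq hf)
  rw [h]; exact continuous_const.add (hf.continuous_primitive 0)

lemma W_bound (hf : Integrable f) (x : ℝ) : ‖W f x‖ ≤ ∫ t, ‖f t‖ := by
  refine (norm_integral_le_integral_norm _).trans ?_
  exact setIntegral_le_integral hf.norm (Filter.Eventually.of_forall fun t => norm_nonneg _)

lemma W_neg_Ioi (hf : Integrable f) (h0 : ∫ x, f x = 0) (x : ℝ) :
    W f x = -∫ t in Set.Ioi x, f t := by
  have h := intervalIntegral.integral_Iic_add_Ioi (b := x) hf.integrableOn hf.integrableOn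
  rw [h0] at h
  unfold W; linarith

lemma W_reflect (hf : Integrable f) (h0 : ∫ x, f x = 0) (x : ℝ) :
    W (fun y => f (-y)) x = -W f (-x) := by
  have h1 : W (fun y => f (-y)) x = ∫ t in Set.Ioi (-x), f t := integral_comp_neg_Iic x f
  rw [h1, W_neg_Ioi hf h0 (-x), neg_neg]

end Aux

section Reflect

variable {f : ℝ → ℝ}

lemma Phi_reflect (hf : Integrable f) (h0 : ∫ x, f x = 0) (x : ℝ) :
    Phi (fun y => f (-y)) x = Phi f (-x) := by
  unfold Phi
  congr 1
  calc (∫ y in (0:ℝ)..x, W (fun y => f (-y)) y)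
      = ∫ y in (0:ℝ)..x, -W f (-y) :=
        intervalIntegral.integral_congr fun y _ => W_reflect hf h0 y
    _ = -∫ y in (0:ℝ)..x, W f (-y) := intervalIntegral.integral_neg
    _ = -∫ y in (-x)..(-(0:ℝ)), W f y := by
        rw [intervalIntegral.integral_comp_neg (fun y => W f y)]
    _ = ∫ y in (0:ℝ)..(-x), W f y := by
        rw [neg_zero, intervalIntegral.integral_symm, neg_neg]

lemma refl_integral (h : ℝ → ℝ) :
    ∫ x in Set.Iic (0:ℝ), h x = ∫ x in Set.Ici (0:ℝ), h (-x) := by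
  have h1 := integral_comp_neg_Ioi (0:ℝ) h
  rw [neg_zero] at h1
  rw [← h1, integral_Ici_eq_integral_Ioi]

lemma refl_integrableOn {h : ℝ → ℝ} (hi : IntegrableOn h (Set.Ici 0)) :
    IntegrableOn (fun x => h (-x)) (Set.Iic 0) := by
  have h_map_neg : ((volume : Measure ℝ).restrict (Set.Ici 0)).map Neg.neg
      = (volume : Measure ℝ).restrict (Set.Iic 0) := by
    conv => rhs; rw [← Measure.map_neg_eq_self (volume : Measure ℝ),
      measurableEmbedding_neg.restrict_map]
    simp
  rw [IntegrableOn, ← h_map_neg, measurableEmbedding_neg.integrable_map_iff]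
  exact hi.congr (Filter.Eventually.of_forall fun x => by simp [Function.comp])

end Reflect

lemma min_reflect (f : ℝ → ℝ) :
    (∫ x in Set.Iic (0:ℝ), ∫ y in Set.Iic (0:ℝ), min |x| |y| * f x * f y)
      = ∫ x in Set.Ici (0:ℝ), ∫ y in Set.Ici (0:ℝ), min x y * f (-x) * f (-y) := by
  have inner : ∀ c x : ℝ, (∫ y in Set.Iic (0:ℝ), min c |y| * f x * f y)
      = ∫ y in Set.Ici (0:ℝ), min c y * f x * f (-y) := by
    intro c x
    rw [refl_integral (fun y => min c |y| * f x * f y)]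
    refine setIntegral_congr_fun measurableSet_Ici fun y hy => ?_
    rw [abs_neg, abs_of_nonneg hy]
  rw [refl_integral (fun x => ∫ y in Set.Iic (0:ℝ), min |x| |y| * f x * f y)]
  refine setIntegral_congr_fun measurableSet_Ici fun x hx => ?_
  show (∫ y in Set.Iic (0:ℝ), min |(-x)| |y| * f (-x) * f y) = _
  rw [inner (|(-x)|) (-x), abs_neg, abs_of_nonneg hx]

local notation "μ₀" => Measure.restrict (volume : Measure ℝ) (Set.Ici (0:ℝ))

lemma pos_lemma (f : ℝ → ℝ) (hsm : StronglyMeasurable f) (hf : Integrable f)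
    (h0 : ∫ x, f x = 0) (hm : Integrable fun x => |x| * f x) :
    IntegrableOn (fun x => (W f x) ^ 2) (Set.Ici 0) ∧
    (∫ x in Set.Ici (0:ℝ), (W f x) ^ 2)
      = (∫ x in Set.Ici (0:ℝ), ∫ y in Set.Ici (0:ℝ), min x y * f x * f y) ∧
    (∫ x in Set.Ici (0:ℝ), Phi f x * f x) = 4 * π * ∫ x in Set.Ici (0:ℝ), (W f x) ^ 2 := by
  set C : ℝ := ∫ t, ‖f t‖ with hC
  set G : ℝ → ℝ := fun x => ∫ t in Set.Ioi x, f t with hGdef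
  have hGW : ∀ x, G x = -W f x := fun x => by
    rw [hGdef, W_neg_Ioi hf h0 x, neg_neg]
  have hGcont : Continuous G := by
    have h : G = fun x => -W f x := funext hGW
    rw [h]; exact (W_cont hf).neg
  have hGbd : ∀ x, ‖G x‖ ≤ C := fun x => by
    rw [hGW x, norm_neg]; exact W_bound hf x
  set K : ℝ × ℝ → ℝ := fun p => (Set.Ioi p.1).indicator f p.2 with hKdef
  have hKsm : StronglyMeasurable K := by
    have h : K = ({p : ℝ × ℝ | p.1 < p.2}).indicator (fun p => f p.2) := by
      funext p
      by_cases h : p.1 < p.2 <;>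
        simp [hKdef, Set.indicator_apply, h, Set.mem_Ioi]
    rw [h]
    exact (hsm.comp_measurable measurable_snd).indicator
      (measurableSet_lt measurable_fst measurable_snd)
  have hIioIci : ∀ t : ℝ, Set.Iio t ∩ Set.Ici 0 = Set.Ico 0 t := by
    intro t; rw [Set.inter_comm, Set.Ici_inter_Iio]
  -- key product integrability
  have hKint : Integrable K (Measure.prod μ₀ μ₀) := by
    refine ⟨hKsm.aestronglyMeasurable, ?_⟩
    rw [hasFiniteIntegral_def, lintegral_prod_symm' _ hKsm.measurable.enorm]
    have hinner : ∀ t : ℝ, (∫⁻ x, (‖K (x, t)‖₊ : ENNReal) ∂μ₀)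
        = ENNReal.ofReal t * ‖f t‖₊ := by
      intro t
      have h : (fun x => (‖K (x, t)‖₊ : ENNReal))
          = (Set.Iio t).indicator (fun _ => (‖f t‖₊ : ENNReal)) := by
        funext x
        by_cases h : x < t <;>
          simp [hKdef, Set.indicator_apply, h, Set.mem_Ioi]
      rw [h, lintegral_indicator measurableSet_Iio, setLIntegral_const,
        Measure.restrict_apply measurableSet_Iio, hIioIci t, Real.volume_Ico,
        sub_zero, mul_comm]
    calc (∫⁻ t, ∫⁻ x, (‖K (x, t)‖₊ : ENNReal) ∂μ₀ ∂μ₀)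
        = ∫⁻ t, ENNReal.ofReal t * ‖f t‖₊ ∂μ₀ := by
          exact lintegral_congr fun t => hinner t
      _ ≤ ∫⁻ t, (‖|t| * f t‖₊ : ENNReal) ∂μ₀ := by
          refine lintegral_mono fun t => ?_
          rw [nnnorm_mul, ENNReal.coe_mul, nnnorm_abs]
          exact mul_le_mul_left (Real.ofReal_le_enorm t) _
      _ ≤ ∫⁻ t, (‖|t| * f t‖₊ : ENNReal) := lintegral_mono' Measure.restrict_le_self le_rfl
      _ < ⊤ := hm.hasFiniteIntegral
  -- slice identity
  have hKG : ∀ x : ℝ, 0 ≤ x → (∫ t, K (x, t) ∂μ₀) = G x := by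
    intro x hx
    calc (∫ t, K (x, t) ∂μ₀) = ∫ t in Set.Ioi x, f t ∂μ₀ :=
        integral_indicator measurableSet_Ioi
      _ = ∫ t in Set.Ioi x ∩ Set.Ici 0, f t := by
          rw [Measure.restrict_restrict measurableSet_Ioi]
      _ = G x := by
          have h2 : Set.Ioi x ∩ Set.Ici 0 = Set.Ioi x :=
            Set.inter_eq_left.mpr fun t ht => le_trans hx (le_of_lt ht)
          rw [h2]
  have hGint : IntegrableOn G (Set.Ici 0) := by
    have h1 : Integrable (fun x => ∫ t, K (x, t) ∂μ₀) μ₀ := hKint.integral_prod_left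
    refine h1.congr ?_
    filter_upwards [ae_restrict_mem measurableSet_Ici] with x hx
    exact hKG x hx
  have hWint : IntegrableOn (fun x => (W f x) ^ 2) (Set.Ici 0) := by
    refine Integrable.mono' (hGint.norm.const_mul C)
      ((W_cont hf).pow 2).aestronglyMeasurable
      (Filter.Eventually.of_forall fun x => ?_)
    have h1 : ‖(W f x) ^ 2‖ = ‖W f x‖ * ‖W f x‖ := by
      rw [pow_two, norm_mul]
    rw [h1]
    calc ‖W f x‖ * ‖W f x‖ ≤ C * ‖W f x‖ :=
        mul_le_mul_of_nonneg_right (W_bound hf x) (norm_nonneg _)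
      _ = C * ‖G x‖ := by rw [hGW x, norm_neg]
  -- Fubini swap 1
  have hswap1 : Integrable (Function.uncurry fun x t => K (x, t) * G x)
      (Measure.prod μ₀ μ₀) := by
    refine Integrable.mono' (hKint.norm.const_mul C)
      (hKint.1.mul ((hGcont.comp continuous_fst).aestronglyMeasurable))
      (Filter.Eventually.of_forall fun p => ?_)
    rw [Function.uncurry]
    rw [norm_mul]
    calc ‖K (p.1, p.2)‖ * ‖G p.1‖ ≤ ‖K (p.1, p.2)‖ * C :=
        mul_le_mul_of_nonneg_left (hGbd p.1) (norm_nonneg _)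
      _ = C * ‖K p‖ := mul_comm _ _
  have hP1 : (∫ x in Set.Ici (0:ℝ), (W f x) ^ 2)
      = ∫ x, (∫ t, K (x, t) * G x ∂μ₀) ∂μ₀ := by
    refine setIntegral_congr_fun measurableSet_Ici fun x hx => ?_
    rw [integral_mul_const, hKG x hx, hGW x]
    ring
  set J : ℝ → ℝ := fun t => ∫ x in Set.Ico 0 t, G x with hJdef
  have hC1 : ∀ t : ℝ, (∫ x, K (x, t) * G x ∂μ₀) = f t * J t := by
    intro t
    have e1 : (fun x => K (x, t) * G x)
        = (Set.Iio t).indicator (fun x => f t * G x) := by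
      funext x
      by_cases h : x < t <;>
        simp [hKdef, Set.indicator_apply, h, Set.mem_Ioi]
    rw [e1, integral_indicator measurableSet_Iio,
      Measure.restrict_restrict measurableSet_Iio, hIioIci t, integral_const_mul]
  have hPJ : (∫ x in Set.Ici (0:ℝ), (W f x) ^ 2) = ∫ t, f t * J t ∂μ₀ := by
    rw [hP1, integral_integral_swap hswap1]
    exact integral_congr_ae (Filter.Eventually.of_forall hC1)
  -- (b) part
  have hJW : ∀ t : ℝ, 0 ≤ t → J t = -∫ y in (0:ℝ)..t, W f y := by
    intro t ht
    have h1 : (∫ y in (0:ℝ)..t, G y) = J t := by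
      rw [intervalIntegral.integral_of_le ht, integral_Ioc_eq_integral_Ioo]
      show _ = ∫ x in Set.Ico 0 t, G x
      rw [integral_Ico_eq_integral_Ioo]
    have h2 : (∫ y in (0:ℝ)..t, G y) = -∫ y in (0:ℝ)..t, W f y := by
      rw [← intervalIntegral.integral_neg]
      exact intervalIntegral.integral_congr fun y _ => hGW y
    rw [← h1, h2]
  have hPB : (∫ x in Set.Ici (0:ℝ), Phi f x * f x)
      = 4 * π * ∫ x in Set.Ici (0:ℝ), (W f x) ^ 2 := by
    have e : Set.EqOn (fun t => Phi f t * f t) (fun t => (4 * π) * (f t * J t))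
        (Set.Ici 0) := by
      intro t ht
      show Phi f t * f t = (4 * π) * (f t * J t)
      rw [Phi, hJW t ht]
      ring
    rw [setIntegral_congr_fun measurableSet_Ici e, integral_const_mul, hPJ]
  -- (a) part
  have hswap2 : ∀ t : ℝ, Integrable
      (Function.uncurry fun x s => (Set.Iio t).indicator (fun x' => K (x', s)) x)
      (Measure.prod μ₀ μ₀) := by
    intro t
    refine Integrable.mono' hKint.norm ?_ (Filter.Eventually.of_forall fun p => ?_)
    · have h : (Function.uncurry fun x s => (Set.Iio t).indicator (fun x' => K (x', s)) x)
          = ({p : ℝ × ℝ | p.1 < t}).indicator K := by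
        funext p
        by_cases h : p.1 < t <;>
          simp [Function.uncurry, Set.indicator_apply, h]
      rw [h]
      exact hKint.1.indicator (measurable_fst measurableSet_Iio)
    · by_cases h : p.1 < t <;>
        simp [Function.uncurry, Set.indicator_apply, h, norm_nonneg]
  have hJK : ∀ t : ℝ, 0 ≤ t →
      J t = ∫ x, (∫ s, (Set.Iio t).indicator (fun x' => K (x', s)) x ∂μ₀) ∂μ₀ := by
    intro t ht
    have h1 : J t = ∫ x, (Set.Iio t).indicator G x ∂μ₀ := by
      rw [integral_indicator measurableSet_Iio,
        Measure.restrict_restrict measurableSet_Iio, hIioIci t]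
    rw [h1]
    refine integral_congr_ae ?_
    filter_upwards [ae_restrict_mem measurableSet_Ici] with x hx
    by_cases h : x < t
    · simp only [Set.indicator_of_mem (Set.mem_Iio.mpr h)]
      exact (hKG x hx).symm
    · simp [Set.indicator_of_notMem, h]
  have hinner2 : ∀ t s : ℝ, (fun x => (Set.Iio t).indicator (fun x' => K (x', s)) x)
      = (Set.Iio (min t s)).indicator (fun _ => f s) := by
    intro t s; funext x
    by_cases h1 : x < t <;> by_cases h2 : x < s <;>
      simp [hKdef, Set.indicator_apply, h1, h2, Set.mem_Ioi, lt_min_iff]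
  have hExx : ∀ t : ℝ, 0 ≤ t → ∀ s : ℝ, 0 ≤ s →
      (∫ x, (Set.Iio t).indicator (fun x' => K (x', s)) x ∂μ₀) = min t s * f s := by
    intro t ht s hs
    rw [hinner2 t s, integral_indicator_const _ measurableSet_Iio,
      measureReal_restrict_apply measurableSet_Iio, hIioIci (min t s),
      Real.volume_real_Ico_of_le (le_min ht hs), smul_eq_mul, sub_zero]
  have hEA : ∀ t : ℝ, 0 ≤ t → f t * J t = ∫ s, min t s * f t * f s ∂μ₀ := by
    intro t ht
    rw [hJK t ht, integral_integral_swap (hswap2 t), ← integral_const_mul]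
    refine integral_congr_ae ?_
    filter_upwards [ae_restrict_mem measurableSet_Ici] with s hs
    rw [hExx t ht s hs]
    ring
  have hPA : (∫ x in Set.Ici (0:ℝ), (W f x) ^ 2)
      = ∫ x in Set.Ici (0:ℝ), ∫ y in Set.Ici (0:ℝ), min x y * f x * f y := by
    rw [hPJ]
    refine integral_congr_ae ?_
    filter_upwards [ae_restrict_mem measurableSet_Ici] with t ht
    exact hEA t ht
  exact ⟨hWint, hPA, hPB⟩

theorem stmt4_sm (f : ℝ → ℝ) (hsm : StronglyMeasurable f) (hf : Integrable f)
    (h0 : ∫ x, f x = 0) (hm : Integrable (fun x => |x| * f x)) :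
    D1 f = 4 * π *
      ((∫ x in Set.Ici (0:ℝ), ∫ y in Set.Ici (0:ℝ), min x y * f x * f y) +
        ∫ x in Set.Iic (0:ℝ), ∫ y in Set.Iic (0:ℝ), min |x| |y| * f x * f y) ∧
    D1 f = ∫ x, Phi f x * f x := by
  obtain ⟨hWf_int, hA_f, hB_f⟩ := pos_lemma f hsm hf h0 hm
  have hgsm : StronglyMeasurable (fun y => f (-y)) := hsm.comp_measurable measurable_neg
  have hgint : Integrable (fun y => f (-y)) := hf.comp_neg
  have hg0 : (∫ x, f (-x)) = 0 := by rw [integral_neg_eq_self]; exact h0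
  have hgm : Integrable (fun x => |x| * f (-x)) := by
    have h : (fun x => |x| * f (-x)) = fun x => (fun y => |y| * f y) (-x) := by
      funext x; simp [abs_neg]
    rw [h]; exact hm.comp_neg
  obtain ⟨hWg_int, hA_g, hB_g⟩ := pos_lemma (fun y => f (-y)) hgsm hgint hg0 hgm
  have hWg2 : ∀ x : ℝ, (W (fun y => f (-y)) x) ^ 2 = (W f (-x)) ^ 2 := fun x => by
    rw [W_reflect hf h0 x]; ring
  have hIicInt : IntegrableOn (fun x => (W f x) ^ 2) (Set.Iic 0) := by
    refine (refl_integrableOn hWg_int).congr (Filter.Eventually.of_forall fun x => ?_)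
    show (W (fun y => f (-y)) (-x)) ^ 2 = (W f x) ^ 2
    rw [hWg2 (-x), neg_neg]
  have hN : (∫ x in Set.Iic (0:ℝ), (W f x) ^ 2)
      = ∫ x in Set.Ici (0:ℝ), (W (fun y => f (-y)) x) ^ 2 := by
    rw [refl_integral (fun x => (W f x) ^ 2)]
    exact (setIntegral_congr_fun measurableSet_Ici fun x _ => hWg2 x).symm
  have hsplit : (∫ x, (W f x) ^ 2)
      = (∫ x in Set.Iic (0:ℝ), (W f x) ^ 2) + ∫ x in Set.Ioi (0:ℝ), (W f x) ^ 2 :=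
    (intervalIntegral.integral_Iic_add_Ioi hIicInt
      (hWf_int.mono_set Set.Ioi_subset_Ici_self)).symm
  have hIoi : (∫ x in Set.Ioi (0:ℝ), (W f x) ^ 2) = ∫ x in Set.Ici (0:ℝ), (W f x) ^ 2 :=
    integral_Ici_eq_integral_Ioi.symm
  constructor
  · show 4 * π * (∫ x, (W f x) ^ 2) = _
    rw [hsplit, hN, hIoi, hA_f, hA_g, ← min_reflect f]
    ring
  · have hPhiCont : Continuous (Phi f) := by
      have h1 : Continuous fun x => ∫ y in (0:ℝ)..x, W f y :=
        intervalIntegral.continuous_primitive (fun a b => (W_cont hf).intervalIntegrable a b) 0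
      exact continuous_const.mul h1
    have hPhiBd : ∀ x : ℝ, ‖Phi f x‖ ≤ 4 * π * (∫ t, ‖f t‖) * |x| := by
      intro x
      have h1 : ‖∫ y in (0:ℝ)..x, W f y‖ ≤ (∫ t, ‖f t‖) * |x - 0| :=
        intervalIntegral.norm_integral_le_of_norm_le_const fun y _ => W_bound hf y
      rw [sub_zero] at h1
      have h2 : ‖(-4 : ℝ) * π‖ = 4 * π := by
        rw [norm_mul]
        simp [Real.norm_eq_abs, abs_of_nonneg pi_nonneg]
      show ‖(-4 : ℝ) * π * ∫ y in (0:ℝ)..x, W f y‖ ≤ _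
      rw [norm_mul, h2]
      calc (4 * π) * ‖∫ y in (0:ℝ)..x, W f y‖ ≤ (4 * π) * ((∫ t, ‖f t‖) * |x|) := by
            refine mul_le_mul_of_nonneg_left h1 (by positivity)
        _ = 4 * π * (∫ t, ‖f t‖) * |x| := by ring
    have hPhiInt : Integrable (fun x => Phi f x * f x) := by
      refine Integrable.mono' (hm.norm.const_mul (4 * π * (∫ t, ‖f t‖)))
        ((hPhiCont.stronglyMeasurable.mul hsm).aestronglyMeasurable)
        (Filter.Eventually.of_forall fun x => ?_)
      rw [norm_mul]
      calc ‖Phi f x‖ * ‖f x‖ ≤ (4 * π * (∫ t, ‖f t‖) * |x|) * ‖f x‖ :=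
          mul_le_mul_of_nonneg_right (hPhiBd x) (norm_nonneg _)
        _ = 4 * π * (∫ t, ‖f t‖) * ‖|x| * f x‖ := by
            simp only [Real.norm_eq_abs, abs_mul, abs_abs]
            ring
    have hsplit2 : (∫ x, Phi f x * f x)
        = (∫ x in Set.Iic (0:ℝ), Phi f x * f x) + ∫ x in Set.Ioi (0:ℝ), Phi f x * f x :=
      (intervalIntegral.integral_Iic_add_Ioi hPhiInt.integrableOn hPhiInt.integrableOn).symm
    have hIic2 : (∫ x in Set.Iic (0:ℝ), Phi f x * f x)
        = 4 * π * ∫ x in Set.Ici (0:ℝ), (W (fun y => f (-y)) x) ^ 2 := by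
      rw [refl_integral (fun x => Phi f x * f x), ← hB_g]
      refine setIntegral_congr_fun measurableSet_Ici fun x _ => ?_
      show Phi f (-x) * f (-x) = Phi (fun y => f (-y)) x * f (-x)
      rw [Phi_reflect hf h0 x]
    have hIoi2 : (∫ x in Set.Ioi (0:ℝ), Phi f x * f x)
        = 4 * π * ∫ x in Set.Ici (0:ℝ), (W f x) ^ 2 := by
      rw [← integral_Ici_eq_integral_Ioi, hB_f]
    show 4 * π * (∫ x, (W f x) ^ 2) = _
    rw [hsplit, hsplit2, hIic2, hIoi2, hIoi, hN]
    ring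

/-- For neutral `f` with finite first moment: `D₁(f)` as a double integral of `min`,
and `D₁(f) = ∫ Φ_f f`. -/
theorem stmt4 (f : ℝ → ℝ) (hf : Integrable f) (h0 : ∫ x, f x = 0)
    (hm : Integrable (fun x => |x| * f x)) :
    D1 f = 4 * π *
      ((∫ x in Set.Ici (0:ℝ), ∫ y in Set.Ici (0:ℝ), min x y * f x * f y) +
        ∫ x in Set.Iic (0:ℝ), ∫ y in Set.Iic (0:ℝ), min |x| |y| * f x * f y) ∧
    D1 f = ∫ x, Phi f x * f x := by
  obtain ⟨g, hgsm, hfg⟩ : ∃ g : ℝ → ℝ, StronglyMeasurable g ∧ f =ᵐ[volume] g :=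
    ⟨hf.1.mk f, hf.1.stronglyMeasurable_mk, hf.1.ae_eq_mk⟩
  have hg : Integrable g := hf.congr hfg
  have hg0 : (∫ x, g x) = 0 := by rw [← integral_congr_ae hfg]; exact h0
  have hgm : Integrable fun x => |x| * g x :=
    hm.congr (hfg.mono fun x hx => by simp only []; rw [hx])
  have hWfg : W f = W g := funext fun x => integral_congr_ae (ae_restrict_of_ae hfg)
  have hD : D1 f = D1 g := by unfold D1; rw [hWfg]
  have hPhi : Phi f = Phi g := by funext x; unfold Phi; rw [hWfg]
  obtain ⟨hA, hB⟩ := stmt4_sm g hgsm hg hg0 hgm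
  have hdbl1 : (∫ x in Set.Ici (0:ℝ), ∫ y in Set.Ici (0:ℝ), min x y * f x * f y)
      = ∫ x in Set.Ici (0:ℝ), ∫ y in Set.Ici (0:ℝ), min x y * g x * g y := by
    refine integral_congr_ae ?_
    filter_upwards [ae_restrict_of_ae hfg] with x hx
    refine integral_congr_ae ?_
    filter_upwards [ae_restrict_of_ae hfg] with y hy
    rw [hx, hy]
  have hdbl2 : (∫ x in Set.Iic (0:ℝ), ∫ y in Set.Iic (0:ℝ), min |x| |y| * f x * f y)
      = ∫ x in Set.Iic (0:ℝ), ∫ y in Set.Iic (0:ℝ), min |x| |y| * g x * g y := by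
    refine integral_congr_ae ?_
    filter_upwards [ae_restrict_of_ae hfg] with x hx
    refine integral_congr_ae ?_
    filter_upwards [ae_restrict_of_ae hfg] with y hy
    rw [hx, hy]
  have hint : (∫ x, Phi f x * f x) = ∫ x, Phi g x * g x := by
    refine integral_congr_ae ?_
    filter_upwards [hfg] with x hx
    rw [hPhi, hx]
  exact ⟨by rw [hD, hdbl1, hdbl2]; exact hA, by rw [hD, hint]; exact hB⟩
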